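/- Surjectivity normalization, case μ = −1, degenerate: if z₁ = conj(z₃) and |z₁| > 1, then with F(λ) = λ^{a₁}|z₁ − λ^{2a₂}conj(z₃)| + λ^{a₂}|z₃ − λ^{2a₁}conj(z₁)| and G(λ) = 1 − λ^{2(a₁+a₂)} one has F(1) = G(1) = 0, F'(1) = −2|z₁|(a₁+a₂) < G'(1) = −2(a₁+a₂), and hence there exists λ ∈ (0,1) with F(λ) = G(λ). -/

import Mathlib

/-- (Surjectivity normalization, case `μ = −1`, degenerate.) If
`z₃ = conj(z₁)` and `|z₁| > 1`, then with
`F(λ) = λ^{a₁}|z₁ − λ^{2a₂} conj(z₃)| + λ^{a₂}|z₃ − λ^{2a₁} conj(z₁)|` and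
`G(λ) = 1 − λ^{2(a₁+a₂)}` one has `F(1) = G(1) = 0`, the (one-sided, within `(-∞,1]`)
derivatives at `1` satisfy `F'(1) = −2|z₁|(a₁+a₂) < G'(1) = −2(a₁+a₂)`, and there exists
`λ ∈ (0,1)` with `F(λ) = G(λ)`. -/
theorem surjectivity_normalization_mu_neg_one_degenerate (a₁ a₂ : ℕ)
    (h1 : 0 < a₁) (h2 : 0 < a₂)
    (z₁ z₃ : ℂ) (hz : 1 < ‖z₁‖) (hconj : z₃ = (starRingEnd ℂ) z₁)
    (F G : ℝ → ℝ)
    (hF : ∀ lam : ℝ, F lam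
      = lam ^ a₁ * ‖z₁ - (lam : ℂ) ^ (2*a₂) * (starRingEnd ℂ) z₃‖
        + lam ^ a₂ * ‖z₃ - (lam : ℂ) ^ (2*a₁) * (starRingEnd ℂ) z₁‖)
    (hG : ∀ lam : ℝ, G lam = 1 - lam ^ (2*(a₁+a₂))) :
    F 1 = 0 ∧ G 1 = 0 ∧
    HasDerivWithinAt F (-2 * ‖z₁‖ * (a₁ + a₂)) (Set.Iic 1) 1 ∧
    HasDerivWithinAt G (-2 * (a₁ + a₂)) (Set.Iic 1) 1 ∧
    (-2 * ‖z₁‖ * (a₁ + a₂) : ℝ) < -2 * (a₁ + a₂) ∧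
    ∃ lam ∈ Set.Ioo (0:ℝ) 1, F lam = G lam := by
  set r : ℝ := ‖z₁‖ with hr
  -- Rewrite F on [0,1]
  set f : ℝ → ℝ := fun l => r * (l ^ a₁ * (1 - l ^ (2*a₂)) + l ^ a₂ * (1 - l ^ (2*a₁)))
    with hfdef
  have key : ∀ l : ℝ, l ∈ Set.Icc (0:ℝ) 1 → F l = f l := by
    intro l hl
    have h2a₂ : l ^ (2*a₂) ≤ 1 := pow_le_one₀ hl.1 hl.2
    have h2a₁ : l ^ (2*a₁) ≤ 1 := pow_le_one₀ hl.1 hl.2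
    have e1 : z₁ - (l : ℂ) ^ (2*a₂) * (starRingEnd ℂ) z₃
        = z₁ * (((1 - l ^ (2*a₂) : ℝ)) : ℂ) := by
      rw [hconj, Complex.conj_conj]; push_cast; ring
    have e2 : z₃ - (l : ℂ) ^ (2*a₁) * (starRingEnd ℂ) z₁
        = (starRingEnd ℂ) z₁ * (((1 - l ^ (2*a₁) : ℝ)) : ℂ) := by
      rw [hconj]; push_cast; ring
    rw [hF, e1, e2, norm_mul, norm_mul, Complex.norm_real, Complex.norm_real, Real.norm_eq_abs, Real.norm_eq_abs,
      Complex.norm_conj, abs_of_nonneg (by linarith), abs_of_nonneg (by linarith)]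
    simp only [hfdef]; ring
  have hF1 : F 1 = 0 := by
    rw [key 1 ⟨zero_le_one, le_refl 1⟩]; simp [hfdef]
  have hG1 : G 1 = 0 := by rw [hG]; simp
  -- derivative of f at 1
  have hfar : HasDerivAt f (-2 * r * (a₁ + a₂)) 1 := by
    have d1 : HasDerivAt (fun l : ℝ => l ^ a₁ * (1 - l ^ (2*a₂)))
        ((a₁ : ℝ) * 1 ^ (a₁ - 1) * (1 - 1 ^ (2*a₂)) + 1 ^ a₁ * (-((2*a₂ : ℕ) * 1 ^ (2*a₂ - 1)))) 1 :=
      (hasDerivAt_pow a₁ 1).mul ((hasDerivAt_pow (2*a₂) 1).const_sub 1)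
    have d2 : HasDerivAt (fun l : ℝ => l ^ a₂ * (1 - l ^ (2*a₁)))
        ((a₂ : ℝ) * 1 ^ (a₂ - 1) * (1 - 1 ^ (2*a₁)) + 1 ^ a₂ * (-((2*a₁ : ℕ) * 1 ^ (2*a₁ - 1)))) 1 :=
      (hasDerivAt_pow a₂ 1).mul ((hasDerivAt_pow (2*a₁) 1).const_sub 1)
    have := ((d1.add d2).const_mul r)
    refine this.congr_deriv ?_
    simp only [one_pow]
    push_cast
    ring
  have hFd : HasDerivWithinAt F (-2 * r * (a₁ + a₂)) (Set.Iic 1) 1 := by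
    have hf' : HasDerivWithinAt f (-2 * r * (a₁ + a₂)) (Set.Iic 1) 1 :=
      hfar.hasDerivWithinAt
    refine hf'.congr_of_eventuallyEq ?_ (key 1 ⟨zero_le_one, le_refl 1⟩)
    have hmem : Set.Ioi (0:ℝ) ∈ nhdsWithin (1:ℝ) (Set.Iic 1) :=
      nhdsWithin_le_nhds (Ioi_mem_nhds one_pos)
    filter_upwards [hmem, self_mem_nhdsWithin] with l hl0 hl1
    exact key l ⟨le_of_lt hl0, hl1⟩
  have hGd : HasDerivWithinAt G (-2 * (a₁ + a₂)) (Set.Iic 1) 1 := by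
    have hGeq : G = fun l : ℝ => 1 - l ^ (2*(a₁+a₂)) := funext hG
    rw [hGeq]
    have := ((hasDerivAt_pow (2*(a₁+a₂)) (1:ℝ)).const_sub 1).hasDerivWithinAt
      (s := Set.Iic 1)
    refine this.congr_deriv ?_
    simp only [one_pow]
    push_cast
    ring
  have hs : (0:ℝ) < (a₁ : ℝ) + a₂ := by positivity
  have hlt : (-2 * r * (a₁ + a₂) : ℝ) < -2 * (a₁ + a₂) := by nlinarith
  refine ⟨hF1, hG1, hFd, hGd, hlt, ?_⟩
  -- existence via IVT
  set H : ℝ → ℝ := fun l => F l - G l with hHdef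
  have hH1 : H 1 = 0 := by simp [hHdef, hF1, hG1]
  have hHd : HasDerivWithinAt H ((-2 * r * (a₁ + a₂)) - (-2 * (a₁ + a₂))) (Set.Iic 1) 1 :=
    hFd.sub hGd
  have hc : ((-2 * r * (a₁ + a₂)) - (-2 * (a₁ + a₂)) : ℝ) < 0 := by linarith
  rw [hasDerivWithinAt_iff_tendsto_slope] at hHd
  have hset : Set.Iic (1:ℝ) \ {1} = Set.Iio 1 := by
    ext x; simp [lt_iff_le_and_ne]
  rw [hset] at hHd
  have hneg : ∀ᶠ l in nhdsWithin (1:ℝ) (Set.Iio 1), slope H 1 l < 0 :=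
    hHd.eventually_lt_const hc
  have hpos : ∀ᶠ l in nhdsWithin (1:ℝ) (Set.Iio 1), (0:ℝ) < l :=
    eventually_nhdsWithin_of_eventually_nhds (eventually_gt_nhds one_pos)
  have hmem1 : ∀ᶠ l in nhdsWithin (1:ℝ) (Set.Iio 1), l ∈ Set.Iio (1:ℝ) :=
    eventually_mem_nhdsWithin
  obtain ⟨l₀, hsl, hl₀pos, hl₀lt⟩ := (hneg.and (hpos.and hmem1)).exists
  have hl₀lt' : l₀ < 1 := hl₀lt
  have hne : l₀ - 1 ≠ 0 := sub_ne_zero.mpr (ne_of_lt hl₀lt')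
  have hHl₀ : 0 < H l₀ := by
    have hslope : slope H 1 l₀ = (H l₀ - H 1) / (l₀ - 1) := slope_def_field H 1 l₀
    have : H l₀ - H 1 = slope H 1 l₀ * (l₀ - 1) := by
      rw [hslope]; field_simp
    have hmul : 0 < slope H 1 l₀ * (l₀ - 1) :=
      mul_pos_of_neg_of_neg hsl (by linarith)
    linarith [this ▸ hmul, hH1.symm ▸ (by linarith : (0:ℝ) ≤ 0)]
  have hFcont : Continuous F := by
    have : F = fun l : ℝ => l ^ a₁ * ‖z₁ - (l : ℂ) ^ (2*a₂) * (starRingEnd ℂ) z₃‖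
        + l ^ a₂ * ‖z₃ - (l : ℂ) ^ (2*a₁) * (starRingEnd ℂ) z₁‖ := funext hF
    rw [this]
    apply Continuous.add <;>
      exact (continuous_pow _).mul (continuous_norm.comp (by fun_prop))
  have hGcont : Continuous G := by
    have : G = fun l : ℝ => 1 - l ^ (2*(a₁+a₂)) := funext hG
    rw [this]; fun_prop
  have hHcont : Continuous H := hFcont.sub hGcont
  have hH0 : H 0 = -1 := by
    have hF0 : F 0 = 0 := by
      rw [hF]; simp [zero_pow h1.ne', zero_pow h2.ne']
    have hG0 : G 0 = 1 := by
      rw [hG]; simp [zero_pow (by positivity : 2*(a₁+a₂) ≠ 0)]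
    simp [hHdef, hF0, hG0]
  have hivt := intermediate_value_Ioo (le_of_lt hl₀pos) hHcont.continuousOn
  have h0mem : (0:ℝ) ∈ Set.Ioo (H 0) (H l₀) := by
    rw [hH0]; exact ⟨by norm_num, hHl₀⟩
  obtain ⟨l, hlmem, hHl⟩ := hivt h0mem
  refine ⟨l, ⟨hlmem.1, lt_trans hlmem.2 hl₀lt'⟩, ?_⟩
  have : F l - G l = 0 := hHl
  linarith
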